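/- The cardinality of ${\mathbb H}_n^* = \{{\mathbf k} \in {\mathbb Z}^{d+1} : \sum_i k_i = 0,\ k_1 \equiv \cdots \equiv k_{d+1} \pmod{d+1},\ -(d+1)n \le k_i - k_j \le (d+1)n \text{ for } i < j\}$ equals $(n+1)^{d+1} - n^{d+1}$. -/

import Mathlib

namespace CardHstarAux

noncomputable def kmin (d : ℕ) (k : Fin (d + 1) → ℤ) : ℤ :=
  Finset.univ.inf' Finset.univ_nonempty k

lemma kmin_le (d : ℕ) (k : Fin (d + 1) → ℤ) (i : Fin (d + 1)) : kmin d k ≤ k i :=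
  Finset.inf'_le _ (Finset.mem_univ i)

lemma exists_kmin (d : ℕ) (k : Fin (d + 1) → ℤ) : ∃ i, k i = kmin d k := by
  obtain ⟨i, -, h⟩ := Finset.exists_mem_eq_inf' (Finset.univ_nonempty) k
  exact ⟨i, h.symm⟩

def bwd (d n : ℕ) (y : Fin (d + 1) → Fin (n + 1)) (i : Fin (d + 1)) : ℤ :=
  ((d : ℤ) + 1) * ((y i : ℕ) : ℤ) - ∑ j, ((y j : ℕ) : ℤ)

lemma hm0 (d : ℕ) : (0 : ℤ) < (d : ℤ) + 1 := by positivity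

lemma fwd_lt (d n : ℕ) (k : Fin (d + 1) → ℤ)
    (hk : (∑ i, k i = 0) ∧ (∀ i j : Fin (d + 1), ((d : ℤ) + 1) ∣ (k i - k j)) ∧
      ∀ i j : Fin (d + 1), |k i - k j| ≤ ((d : ℤ) + 1) * n) (i : Fin (d + 1)) :
    ((k i - kmin d k) / ((d : ℤ) + 1)).toNat < n + 1 := by
  obtain ⟨hs, hdvd, hb⟩ := hk
  obtain ⟨i₀, hi₀⟩ := exists_kmin d k
  have h1 : k i - kmin d k ≤ ((d : ℤ) + 1) * n := by
    have := hb i i₀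
    rw [hi₀] at this
    exact (abs_le.mp this).2
  have h2 : (k i - kmin d k) / ((d : ℤ) + 1) ≤ n := by
    calc (k i - kmin d k) / ((d : ℤ) + 1) ≤ (((d : ℤ) + 1) * n) / ((d : ℤ) + 1) :=
          Int.ediv_le_ediv (hm0 d) h1
      _ = n := Int.mul_ediv_cancel_left _ (ne_of_gt (hm0 d))
  omega

lemma fwd_exists (d n : ℕ) (k : Fin (d + 1) → ℤ)
    (hk : (∑ i, k i = 0) ∧ (∀ i j : Fin (d + 1), ((d : ℤ) + 1) ∣ (k i - k j)) ∧
      ∀ i j : Fin (d + 1), |k i - k j| ≤ ((d : ℤ) + 1) * n) :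
    ∃ i, (⟨((k i - kmin d k) / ((d : ℤ) + 1)).toNat, fwd_lt d n k hk i⟩ : Fin (n + 1)) = 0 := by
  obtain ⟨i₀, hi₀⟩ := exists_kmin d k
  refine ⟨i₀, ?_⟩
  apply Fin.ext
  simp [hi₀]

lemma bwd_mem (d n : ℕ) (y : Fin (d + 1) → Fin (n + 1)) :
    (∑ i, bwd d n y i = 0) ∧
      (∀ i j : Fin (d + 1), ((d : ℤ) + 1) ∣ (bwd d n y i - bwd d n y j)) ∧
      ∀ i j : Fin (d + 1), |bwd d n y i - bwd d n y j| ≤ ((d : ℤ) + 1) * n := by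
  refine ⟨?_, ?_, ?_⟩
  · have hcard : (Finset.univ : Finset (Fin (d + 1))).card = d + 1 := by simp
    simp only [bwd, Finset.sum_sub_distrib, ← Finset.mul_sum, Finset.sum_const, hcard,
      nsmul_eq_mul]
    push_cast
    ring
  · intro i j
    exact ⟨((y i : ℕ) : ℤ) - ((y j : ℕ) : ℤ), by simp only [bwd]; ring⟩
  · intro i j
    have h1 : ((y i : ℕ) : ℤ) ≤ n := by exact_mod_cast Fin.is_le (y i)
    have h2 : ((y j : ℕ) : ℤ) ≤ n := by exact_mod_cast Fin.is_le (y j)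
    have h3 : (0 : ℤ) ≤ ((y i : ℕ) : ℤ) := Int.natCast_nonneg _
    have h4 : (0 : ℤ) ≤ ((y j : ℕ) : ℤ) := Int.natCast_nonneg _
    have he : bwd d n y i - bwd d n y j
        = ((d : ℤ) + 1) * (((y i : ℕ) : ℤ) - ((y j : ℕ) : ℤ)) := by
      simp only [bwd]; ring
    rw [he, abs_mul, abs_of_pos (hm0 d)]
    have hle : |((y i : ℕ) : ℤ) - ((y j : ℕ) : ℤ)| ≤ n :=
      abs_le.mpr ⟨by linarith, by linarith⟩
    exact mul_le_mul_of_nonneg_left hle (le_of_lt (hm0 d))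

end CardHstarAux

open CardHstarAux in
/-- The cardinality of `ℍ_n^*` is `(n+1)^{d+1} - n^{d+1}`. -/
theorem card_Hstar (d n : ℕ) (hd : 1 ≤ d) :
    Set.ncard {k : Fin (d + 1) → ℤ |
        (∑ i, k i = 0) ∧ (∀ i j : Fin (d + 1), ((d : ℤ) + 1) ∣ (k i - k j)) ∧
        ∀ i j : Fin (d + 1), |k i - k j| ≤ ((d : ℤ) + 1) * n} =
      (n + 1) ^ (d + 1) - n ^ (d + 1) := by
  classical
  have hmne : ((d : ℤ) + 1) ≠ 0 := ne_of_gt (hm0 d)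
  -- Count of the target type
  have hcount : Fintype.card {y : Fin (d + 1) → Fin (n + 1) // ∃ i, y i = 0}
      = (n + 1) ^ (d + 1) - n ^ (d + 1) := by
    have h2 : Fintype.card {y : Fin (d + 1) → Fin (n + 1) // ¬ ∃ i, y i = 0}
        = n ^ (d + 1) := by
      have e : {y : Fin (d + 1) → Fin (n + 1) // ¬ ∃ i, y i = 0}
          ≃ (Fin (d + 1) → {x : Fin (n + 1) // x ≠ 0}) :=
        (Equiv.subtypeEquivRight (fun y => by push_neg; rfl)).trans
          (Equiv.subtypePiEquivPi)
      rw [Fintype.card_congr e]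
      have hx : Fintype.card {x : Fin (n + 1) // x ≠ 0} = n := by
        have := Fintype.card_subtype_compl (fun x : Fin (n + 1) => x = 0)
        simpa [Fintype.card_subtype_eq] using this
      simp [Fintype.card_fun, hx]
    have h3 : Fintype.card {y : Fin (d + 1) → Fin (n + 1) // ¬ ∃ i, y i = 0}
        = Fintype.card (Fin (d + 1) → Fin (n + 1))
          - Fintype.card {y : Fin (d + 1) → Fin (n + 1) // ∃ i, y i = 0} :=
      Fintype.card_subtype_compl _
    have htot : Fintype.card (Fin (d + 1) → Fin (n + 1)) = (n + 1) ^ (d + 1) := by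
      simp
    have hle : Fintype.card {y : Fin (d + 1) → Fin (n + 1) // ∃ i, y i = 0}
        ≤ (n + 1) ^ (d + 1) := by
      rw [← htot]; exact Fintype.card_subtype_le _
    rw [h2, htot] at h3
    generalize hA : Fintype.card {y : Fin (d + 1) → Fin (n + 1) // ∃ i, y i = 0} = A at h3 hle ⊢
    generalize hP : (n + 1) ^ (d + 1) = P at h3 hle ⊢
    generalize hQ : n ^ (d + 1) = Q at h3 ⊢
    clear hA hP hQ h2
    clear htot
    omega
  rw [← Nat.card_coe_set_eq, ← hcount, ← Nat.card_eq_fintype_card]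
  apply Nat.card_congr
  refine
    { toFun := fun k => ⟨fun i => ⟨((k.1 i - kmin d k.1) / ((d : ℤ) + 1)).toNat,
        fwd_lt d n k.1 k.2 i⟩, fwd_exists d n k.1 k.2⟩
      invFun := fun y => ⟨bwd d n y.1, bwd_mem d n y.1⟩
      left_inv := ?_
      right_inv := ?_ }
  · -- left inverse
    rintro ⟨k, hs, hdvd, hb⟩
    apply Subtype.ext
    funext i
    obtain ⟨i₀, hi₀⟩ := exists_kmin d k
    have hdvd' : ∀ j, ((d : ℤ) + 1) ∣ k j - kmin d k := fun j => by
      rw [← hi₀]; exact hdvd j i₀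
    have hmul : ∀ j, ((d : ℤ) + 1) * ((k j - kmin d k) / ((d : ℤ) + 1)) = k j - kmin d k :=
      fun j => Int.mul_ediv_cancel' (hdvd' j)
    have hnn : ∀ j, 0 ≤ (k j - kmin d k) / ((d : ℤ) + 1) := fun j =>
      Int.ediv_nonneg (by linarith [kmin_le d k j]) (le_of_lt (hm0 d))
    have hsum : ∑ j, (k j - kmin d k) / ((d : ℤ) + 1) = -kmin d k := by
      have h : ((d : ℤ) + 1) * ∑ j, (k j - kmin d k) / ((d : ℤ) + 1)
          = ((d : ℤ) + 1) * (-kmin d k) := by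
        rw [Finset.mul_sum]
        simp only [hmul]
        rw [Finset.sum_sub_distrib, hs]
        simp [mul_comm]
      exact mul_left_cancel₀ hmne h
    show bwd d n _ i = k i
    simp only [bwd]
    have hco : ∀ j, ((((k j - kmin d k) / ((d : ℤ) + 1)).toNat : ℕ) : ℤ)
        = (k j - kmin d k) / ((d : ℤ) + 1) :=
      fun j => Int.toNat_of_nonneg (hnn j)
    simp only [Fin.val_mk, hco]
    rw [hsum, hmul]
    ring
  · -- right inverse
    rintro ⟨y, i₀, hy0⟩
    apply Subtype.ext
    funext i
    have hb0 : bwd d n y i₀ = -∑ j, ((y j : ℕ) : ℤ) := by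
      simp [bwd, hy0]
    have hmin : kmin d (bwd d n y) = -∑ j, ((y j : ℕ) : ℤ) := by
      apply le_antisymm
      · rw [← hb0]; exact kmin_le d _ i₀
      · apply Finset.le_inf'
        intro j _
        have h : (0 : ℤ) ≤ ((d : ℤ) + 1) * ((y j : ℕ) : ℤ) :=
          mul_nonneg (le_of_lt (hm0 d)) (Int.natCast_nonneg _)
        simp only [bwd]
        linarith
    apply Fin.ext
    show ((bwd d n y i - kmin d (bwd d n y)) / ((d : ℤ) + 1)).toNat = (y i : ℕ)
    rw [hmin]
    have he : bwd d n y i - -∑ j, ((y j : ℕ) : ℤ) = ((d : ℤ) + 1) * ((y i : ℕ) : ℤ) := by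
      simp only [bwd]; ring
    rw [he, Int.mul_ediv_cancel_left _ hmne]
    simp
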